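/- If q, λ : [t₀, ∞) → ℝ are continuous with |q(t)| ≤ α and λ(t) ≥ h > 0 for all t ≥ t₀, where 4h - α² > 0, then every nontrivial solution y of y'' + q y' + λ y = 0 on [t₀, ∞) changes sign infinitely many times (i.e., for every T ≥ t₀ there exist t₁, t₂ > T with y(t₁) > 0 and y(t₂) < 0). -/

import Mathlib

open Real Set

/-- If `f' ≤ m` on `[a,∞)` then `f t ≤ f a + m (t-a)`. -/
lemma aux_deriv_le (f f' : ℝ → ℝ) (a m : ℝ)
    (hf : ∀ t ≥ a, HasDerivAt f (f' t) t) (hb : ∀ t ≥ a, f' t ≤ m) :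
    ∀ t ≥ a, f t ≤ f a + m * (t - a) := by
  intro t ht
  have key : AntitoneOn (fun x => f x - m * x) (Ici a) := by
    apply antitoneOn_of_deriv_nonpos (convex_Ici a)
    · intro x hx
      exact ((hf x hx).sub (((hasDerivAt_id x).const_mul m))).continuousAt.continuousWithinAt
    · intro x hx
      rw [interior_Ici] at hx
      exact ((hf x (le_of_lt hx)).sub ((hasDerivAt_id x).const_mul m)).differentiableAt.differentiableWithinAt
    · intro x hx
      rw [interior_Ici] at hx
      have hd : HasDerivAt (fun x => f x - m * x) (f' x - m) x := by
        exact ((hf x (le_of_lt hx)).sub ((hasDerivAt_id' x).const_mul m)).congr_deriv (by ring)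
      rw [hd.deriv]
      have := hb x (le_of_lt hx)
      linarith
  have := key (self_mem_Ici) (mem_Ici.2 ht) ht
  simp only at this
  linarith

/-- If `f' ≥ m` on `[a,∞)` then `f t ≥ f a + m (t-a)`. -/
lemma aux_deriv_ge (f f' : ℝ → ℝ) (a m : ℝ)
    (hf : ∀ t ≥ a, HasDerivAt f (f' t) t) (hb : ∀ t ≥ a, f' t ≥ m) :
    ∀ t ≥ a, f t ≥ f a + m * (t - a) := by
  intro t ht
  have := aux_deriv_le (fun x => -f x) (fun x => -f' x) a (-m)
    (fun x hx => (hf x hx).neg) (fun x hx => by simpa using hb x hx) t ht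
  simp only [neg_mul] at this
  linarith

/-- Uniqueness: a solution with a double zero vanishes identically. -/
lemma aux_uniq (t₀ α : ℝ) (q l y y' y'' : ℝ → ℝ)
    (hl_cont : ContinuousOn l (Ici t₀))
    (hq : ∀ t ≥ t₀, |q t| ≤ α)
    (hy' : ∀ t ≥ t₀, HasDerivAt y (y' t) t)
    (hy'' : ∀ t ≥ t₀, HasDerivAt y' (y'' t) t)
    (hode : ∀ t ≥ t₀, y'' t + q t * y' t + l t * y t = 0)
    {s : ℝ} (hs : t₀ ≤ s) (h0 : y s = 0) (h0' : y' s = 0) :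
    ∀ t ≥ t₀, y t = 0 := by
  intro t ht
  have hα0 : 0 ≤ α := le_trans (abs_nonneg _) (hq t₀ le_rfl)
  -- the key estimate, on any subinterval [a,b] of [t₀,∞)
  rcases le_total s t with hst | hts
  · -- forward: interval [s, t]
    have hsub : Icc s t ⊆ Ici t₀ := fun x hx => le_trans hs hx.1
    obtain ⟨L, hL⟩ := (isCompact_Icc (a := s) (b := t)).exists_bound_of_continuousOn
      (hl_cont.mono hsub)
    have hL0 : 0 ≤ L := le_trans (norm_nonneg _) (hL s ⟨le_rfl, hst⟩)
    set K := 1 + α + L with hK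
    set f : ℝ → ℝ × ℝ := fun τ => (y τ, y' τ) with hf
    have hcont : ContinuousOn f (Icc s t) := by
      intro x hx
      exact (((hy' x (hsub hx)).continuousAt).prodMk ((hy'' x (hsub hx)).continuousAt)).continuousWithinAt
    have hderiv : ∀ x ∈ Ico s t, HasDerivWithinAt f (y' x, y'' x) (Ici x) x := by
      intro x hx
      have hx' : t₀ ≤ x := le_trans hs hx.1
      exact ((hy' x hx').prodMk (hy'' x hx')).hasDerivWithinAt
    have hbound : ∀ x ∈ Ico s t, ‖(y' x, y'' x)‖ ≤ K * ‖f x‖ + 0 := by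
      intro x hx
      have hx'' : x ∈ Icc s t := ⟨hx.1, le_of_lt hx.2⟩
      have hx' : t₀ ≤ x := le_trans hs hx.1
      have h1 : |y' x| ≤ ‖f x‖ := le_max_right _ _
      have h2 : |y x| ≤ ‖f x‖ := le_max_left _ _
      have h3 : |y'' x| ≤ α * |y' x| + L * |y x| := by
        have he : y'' x = -(q x * y' x + l x * y x) := by linarith [hode x hx']
        rw [he, abs_neg]
        calc |q x * y' x + l x * y x| ≤ |q x * y' x| + |l x * y x| := abs_add_le _ _
          _ = |q x| * |y' x| + |l x| * |y x| := by rw [abs_mul, abs_mul]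
          _ ≤ α * |y' x| + L * |y x| := by
              have e1 := mul_le_mul_of_nonneg_right (hq x hx') (abs_nonneg (y' x))
              have e2 : |l x| ≤ L := by simpa [Real.norm_eq_abs] using hL x hx''
              have e3 := mul_le_mul_of_nonneg_right e2 (abs_nonneg (y x))
              linarith
      have hfn : 0 ≤ ‖f x‖ := norm_nonneg _
      rw [Prod.norm_def]
      simp only [Real.norm_eq_abs, add_zero]
      apply max_le
      · nlinarith
      · nlinarith
    have h00 : ‖f s‖ ≤ 0 := by
      simp [hf, h0, h0', Prod.norm_def]
    have := norm_le_gronwallBound_of_norm_deriv_right_le hcont hderiv h00 hbound t ⟨hst, le_rfl⟩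
    rw [gronwallBound_ε0_δ0] at this
    have : f t = 0 := norm_le_zero_iff.1 this
    exact congrArg Prod.fst this
  · -- backward: interval [t, s], reverse time
    have hsub : Icc t s ⊆ Ici t₀ := fun x hx => le_trans ht hx.1
    obtain ⟨L, hL⟩ := (isCompact_Icc (a := t) (b := s)).exists_bound_of_continuousOn
      (hl_cont.mono hsub)
    have hL0 : 0 ≤ L := le_trans (norm_nonneg _) (hL t ⟨le_rfl, hts⟩)
    set K := 1 + α + L with hK
    set g : ℝ → ℝ × ℝ := fun τ => (y (t + s - τ), y' (t + s - τ)) with hg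
    have hmem : ∀ τ ∈ Icc t s, t + s - τ ∈ Icc t s := by
      intro τ hτ
      constructor <;> [linarith [hτ.2]; linarith [hτ.1]]
    have haff : ∀ τ : ℝ, HasDerivAt (fun τ => t + s - τ) (-1 : ℝ) τ := by
      intro τ
      exact ((hasDerivAt_const τ (t + s)).sub (hasDerivAt_id' τ)).congr_deriv (by ring)
    have hgderiv : ∀ τ, t + s - τ ∈ Icc t s →
        HasDerivAt g (-y' (t + s - τ), -y'' (t + s - τ)) τ := by
      intro τ hτ
      have hσ : t₀ ≤ t + s - τ := hsub hτ
      have d1 : HasDerivAt (fun τ => y (t + s - τ)) (-y' (t + s - τ)) τ := by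
        have := (hy' _ hσ).comp τ (haff τ)
        exact this.congr_deriv (by ring)
      have d2 : HasDerivAt (fun τ => y' (t + s - τ)) (-y'' (t + s - τ)) τ := by
        have := (hy'' _ hσ).comp τ (haff τ)
        exact this.congr_deriv (by ring)
      exact d1.prodMk d2
    have hcont : ContinuousOn g (Icc t s) := by
      intro x hx
      exact ((hgderiv x (hmem x hx)).continuousAt).continuousWithinAt
    have hderiv : ∀ x ∈ Ico t s, HasDerivWithinAt g (-y' (t + s - x), -y'' (t + s - x)) (Ici x) x := by
      intro x hx
      exact (hgderiv x (hmem x ⟨hx.1, le_of_lt hx.2⟩)).hasDerivWithinAt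
    have hbound : ∀ x ∈ Ico t s, ‖(-y' (t + s - x), -y'' (t + s - x))‖ ≤ K * ‖g x‖ + 0 := by
      intro x hx
      set σ := t + s - x with hσdef
      have hσm : σ ∈ Icc t s := hmem x ⟨hx.1, le_of_lt hx.2⟩
      have hσ' : t₀ ≤ σ := hsub hσm
      have h1 : |y' σ| ≤ ‖g x‖ := le_max_right _ _
      have h2 : |y σ| ≤ ‖g x‖ := le_max_left _ _
      have h3 : |y'' σ| ≤ α * |y' σ| + L * |y σ| := by
        have he : y'' σ = -(q σ * y' σ + l σ * y σ) := by linarith [hode σ hσ']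
        rw [he, abs_neg]
        calc |q σ * y' σ + l σ * y σ| ≤ |q σ * y' σ| + |l σ * y σ| := abs_add_le _ _
          _ = |q σ| * |y' σ| + |l σ| * |y σ| := by rw [abs_mul, abs_mul]
          _ ≤ α * |y' σ| + L * |y σ| := by
              have e1 := mul_le_mul_of_nonneg_right (hq σ hσ') (abs_nonneg (y' σ))
              have e2 : |l σ| ≤ L := by simpa [Real.norm_eq_abs] using hL σ hσm
              have e3 := mul_le_mul_of_nonneg_right e2 (abs_nonneg (y σ))
              linarith
      have hfn : 0 ≤ ‖g x‖ := norm_nonneg _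
      rw [Prod.norm_def]
      simp only [Real.norm_eq_abs, add_zero, abs_neg]
      apply max_le
      · nlinarith
      · nlinarith
    have h00 : ‖g t‖ ≤ 0 := by
      have : t + s - t = s := by ring
      simp [hg, this, h0, h0', Prod.norm_def]
    have := norm_le_gronwallBound_of_norm_deriv_right_le hcont hderiv h00 hbound s ⟨hts, le_rfl⟩
    rw [gronwallBound_ε0_δ0] at this
    have hg0 : g s = 0 := norm_le_zero_iff.1 this
    have : y (t + s - s) = 0 := congrArg Prod.fst hg0
    simpa using this

/-- Riccati argument: a solution cannot stay nonzero on a half-line. -/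
lemma aux_ricc (t₀ α h : ℝ) (q l y y' y'' : ℝ → ℝ)
    (hq : ∀ t ≥ t₀, |q t| ≤ α) (hl : ∀ t ≥ t₀, l t ≥ h)
    (hh : 0 < h) (hαh : 4 * h - α ^ 2 > 0)
    (hy' : ∀ t ≥ t₀, HasDerivAt y (y' t) t)
    (hy'' : ∀ t ≥ t₀, HasDerivAt y' (y'' t) t)
    (hode : ∀ t ≥ t₀, y'' t + q t * y' t + l t * y t = 0)
    (T : ℝ) (hT : t₀ ≤ T) (hny : ∀ t ≥ T, y t ≠ 0) : False := by
  have hα0 : 0 ≤ α := le_trans (abs_nonneg _) (hq t₀ le_rfl)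
  set c := h - α ^ 2 / 4 with hc
  clear_value c
  have hc0 : 0 < c := by nlinarith
  set w : ℝ → ℝ := fun t => y' t / y t with hw
  clear_value w
  set w' : ℝ → ℝ := fun t => -(w t) ^ 2 - q t * w t - l t with hw'
  clear_value w'
  have hwderiv : ∀ t ≥ T, HasDerivAt w (w' t) t := by
    intro t htT
    have ht0 : t₀ ≤ t := le_trans hT htT
    have hne := hny t htT
    have hd := (hy'' t ht0).div (hy' t ht0) hne
    have hval : w' t = (y'' t * y t - y' t * y' t) / y t ^ 2 := by
      simp only [hw', hw]
      field_simp
      rw [show y'' t = -(q t * y' t + l t * y t) by linarith [hode t ht0]]; ring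
    rw [hw, hval]
    exact hd
  have habs : ∀ t ≥ T, -(q t * w t) ≤ α * |w t| := by
    intro t htT
    have ht0 : t₀ ≤ t := le_trans hT htT
    calc -(q t * w t) ≤ |q t * w t| := neg_le_abs _
      _ = |q t| * |w t| := abs_mul _ _
      _ ≤ α * |w t| := mul_le_mul_of_nonneg_right (hq t ht0) (abs_nonneg _)
  have hwle : ∀ t ≥ T, w' t ≤ -c := by
    intro t htT
    have ht0 : t₀ ≤ t := le_trans hT htT
    have h1 := habs t htT
    have h2 := hl t ht0
    have h3 : (|w t| - α / 2) ^ 2 ≥ 0 := sq_nonneg _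
    have h4 : |w t| ^ 2 = (w t) ^ 2 := sq_abs _
    simp only [hw']
    nlinarith
  have hdec := aux_deriv_le w w' T (-c) hwderiv hwle
  set B := max (w T) (-(2 * α + 1)) with hB
  clear_value B
  set t₁ := T + (B + 2 * α + 1) / c with ht₁def
  clear_value t₁
  have hBge : B + 2 * α + 1 ≥ 0 := by
    have := le_max_right (w T) (-(2 * α + 1))
    linarith
  have ht₁ : T ≤ t₁ := by
    have : 0 ≤ (B + 2 * α + 1) / c := div_nonneg hBge (le_of_lt hc0)
    linarith
  have hneg : ∀ t ≥ t₁, w t ≤ -(2 * α + 1) := by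
    intro t ht
    have htT : t ≥ T := le_trans ht₁ ht
    have hd := hdec t htT
    have hct : c * (t - T) ≥ B + 2 * α + 1 := by
      have h5 : t - T ≥ (B + 2 * α + 1) / c := by
        have := ht
        rw [ht₁def] at this
        linarith
      calc c * (t - T) ≥ c * ((B + 2 * α + 1) / c) :=
            mul_le_mul_of_nonneg_left h5 (le_of_lt hc0)
        _ = B + 2 * α + 1 := by field_simp
    have hwTB : w T ≤ B := by rw [hB]; exact le_max_left _ _
    nlinarith
  have hwneg : ∀ t ≥ t₁, w t < 0 := by
    intro t ht
    have := hneg t ht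
    linarith
  set u : ℝ → ℝ := fun t => (w t)⁻¹ with hu
  clear_value u
  set u' : ℝ → ℝ := fun t => -(w' t) / (w t) ^ 2 with hu'
  clear_value u'
  have huderiv : ∀ t ≥ t₁, HasDerivAt u (u' t) t := by
    intro t ht
    simp only [hu, hu']
    exact (hwderiv t (le_trans ht₁ ht)).inv (ne_of_lt (hwneg t ht))
  have hu'ge : ∀ t ≥ t₁, u' t ≥ 1 / 2 := by
    intro t ht
    have htT : t ≥ T := le_trans ht₁ ht
    have ht0 : t₀ ≤ t := le_trans hT htT
    have hwn := hneg t ht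
    have hwsq : 0 < (w t) ^ 2 := by nlinarith [hwneg t ht]
    have h1 := habs t htT
    have h2 := hl t ht0
    have habsw : |w t| = -(w t) := abs_of_neg (hwneg t ht)
    have key : w' t ≤ -(w t) ^ 2 / 2 := by
      simp only [hw']
      nlinarith [h1, habsw, mul_nonneg (by linarith : (0:ℝ) ≤ -w t - 2 * α) (by linarith : (0:ℝ) ≤ -w t)]
    simp only [hu', ge_iff_le, le_div_iff₀ hwsq]
    nlinarith
  have hgrow := aux_deriv_ge u u' t₁ (1 / 2) huderiv hu'ge
  have hu₁neg : u t₁ < 0 := by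
    simp only [hu]
    exact inv_lt_zero.2 (hwneg t₁ le_rfl)
  set t₂ := t₁ + 2 * (1 - u t₁) with ht₂
  clear_value t₂
  have ht₂ge : t₂ ≥ t₁ := by nlinarith
  have := hgrow t₂ ht₂ge
  have hu₂neg : u t₂ < 0 := by
    simp only [hu]
    exact inv_lt_zero.2 (hwneg t₂ ht₂ge)
  have : u t₂ ≥ u t₁ + 1 / 2 * (t₂ - t₁) := this
  rw [ht₂] at this
  nlinarith

/-- Key lemma: the solution takes positive values beyond any `T`. -/
lemma aux_pos (t₀ α h : ℝ) (q l y y' y'' : ℝ → ℝ)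
    (hl_cont : ContinuousOn l (Ici t₀))
    (hq : ∀ t ≥ t₀, |q t| ≤ α) (hl : ∀ t ≥ t₀, l t ≥ h) (hh : 0 < h)
    (hαh : 4 * h - α ^ 2 > 0)
    (hy' : ∀ t ≥ t₀, HasDerivAt y (y' t) t)
    (hy'' : ∀ t ≥ t₀, HasDerivAt y' (y'' t) t)
    (hode : ∀ t ≥ t₀, y'' t + q t * y' t + l t * y t = 0)
    (hnontriv : ∃ t ≥ t₀, y t ≠ 0) :
    ∀ T ≥ t₀, ∃ t₁ > T, y t₁ > 0 := by
  intro T hT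
  by_contra hcon
  push_neg at hcon
  by_cases hz : ∃ s > T, y s = 0
  · obtain ⟨s, hsT, hs0⟩ := hz
    have hs0' : t₀ ≤ s := le_trans hT (le_of_lt hsT)
    have hmax : IsLocalMax y s := by
      have hmem : Ioi T ∈ nhds s := Ioi_mem_nhds hsT
      filter_upwards [hmem] with x hx
      rw [hs0]
      exact hcon x hx
    have hy's : y' s = 0 := hmax.hasDerivAt_eq_zero (hy' s hs0')
    obtain ⟨t', ht', hyt'⟩ := hnontriv
    exact hyt' (aux_uniq t₀ α q l y y' y'' hl_cont hq hy' hy'' hode hs0' hs0 hy's t' ht')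
  · push_neg at hz
    exact aux_ricc t₀ α h q l y y' y'' hq hl hh hαh hy' hy'' hode (T + 1)
      (by linarith) (fun t ht => hz t (by linarith))

/-- Fite's oscillation theorem: if `q, l : [t₀,∞) → ℝ` are continuous with `|q t| ≤ α`
and `l t ≥ h > 0` for all `t ≥ t₀`, where `4h - α² > 0`, then every nontrivial `C²`
solution `y` of `y'' + q y' + l y = 0` on `[t₀,∞)` changes sign infinitely many times. -/
theorem stmt_1 (t₀ α h : ℝ) (q l y y' y'' : ℝ → ℝ)
    (hq_cont : ContinuousOn q (Ici t₀)) (hl_cont : ContinuousOn l (Ici t₀))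
    (hq : ∀ t ≥ t₀, |q t| ≤ α) (hl : ∀ t ≥ t₀, l t ≥ h) (hh : 0 < h)
    (hαh : 4 * h - α ^ 2 > 0)
    (hy' : ∀ t ≥ t₀, HasDerivAt y (y' t) t)
    (hy'' : ∀ t ≥ t₀, HasDerivAt y' (y'' t) t)
    (hy''_cont : ContinuousOn y'' (Ici t₀))
    (hode : ∀ t ≥ t₀, y'' t + q t * y' t + l t * y t = 0)
    (hnontriv : ∃ t ≥ t₀, y t ≠ 0) :
    ∀ T ≥ t₀, (∃ t₁ > T, y t₁ > 0) ∧ (∃ t₂ > T, y t₂ < 0) := by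
  intro T hT
  constructor
  · exact aux_pos t₀ α h q l y y' y'' hl_cont hq hl hh hαh hy' hy'' hode hnontriv T hT
  · have hneg := aux_pos t₀ α h q l (fun t => -y t) (fun t => -y' t) (fun t => -y'' t)
      hl_cont hq hl hh hαh
      (fun t ht => (hy' t ht).neg) (fun t ht => (hy'' t ht).neg)
      (fun t ht => by have := hode t ht; ring_nf; linarith)
      (by obtain ⟨t', ht', hyt'⟩ := hnontriv; exact ⟨t', ht', by simpa using hyt'⟩)
      T hT
    obtain ⟨t₂, ht₂, hpos⟩ := hneg
    exact ⟨t₂, ht₂, by simpa using hpos⟩
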